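/- Fix α > 0 and β ∈ ℝ and let 𝔤 = 𝔤^{α,β}_{4.6} be the 4-dimensional real Lie algebra with basis e₁,...,e₄ and nonzero brackets [e₁,e₄] = αe₁, [e₂,e₄] = βe₂ − e₃, [e₃,e₄] = e₂ + βe₃. A 4×4 real matrix R equals η·Id + D for some η ∈ ℝ and some derivation D of 𝔤 if and only if R₄₁ = R₄₂ = R₄₃ = 0, R₃₃ = R₂₂, R₃₂ = −R₂₃, βR₂₁ + R₃₁ = αR₂₁, −R₂₁ + βR₃₁ = αR₃₁, αR₁₂ = βR₁₂ − R₁₃, and αR₁₃ = R₁₂ + βR₁₃. In this case η = R₄₄. -/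
import Mathlib


open Matrix

/-- The Lie bracket of the Lie algebra, in coordinates. -/
def br (α : ℝ) (β : ℝ) (x y : Fin 4 → ℝ) : Fin 4 → ℝ :=
  ![α * (x 0 * y 3 - x 3 * y 0), β * (x 1 * y 3 - x 3 * y 1) + (x 2 * y 3 - x 3 * y 2), -(x 1 * y 3 - x 3 * y 1) + β * (x 2 * y 3 - x 3 * y 2), (0:ℝ)]

/-- `D` (acting via `mulVec`) is a derivation of the bracket. -/
def IsDer (α : ℝ) (β : ℝ) (D : Matrix (Fin 4) (Fin 4) ℝ) : Prop :=
  ∀ x y : Fin 4 → ℝ, D.mulVec (br α β x y) = br α β (D.mulVec x) y + br α β x (D.mulVec y)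

lemma der_explicit (α β a b c d e f : ℝ) :
    IsDer α β !![a,0,0,b; 0,c,d,e; 0,-d,c,f; 0,0,0,0] := by
  intro x y
  funext i
  fin_cases i <;>
    simp [br, Matrix.mulVec, dotProduct, Fin.sum_univ_four] <;> ring

lemma der_D33 (α β : ℝ) (hα : 0 < α) (D : Matrix (Fin 4) (Fin 4) ℝ) (hD : IsDer α β D) :
    D 3 3 = 0 := by
  have a0 := congrFun (hD ![1,0,0,0] ![0,0,0,1]) 0
  simp [br, Matrix.mulVec, dotProduct, Fin.sum_univ_four] at a0
  have : α * D 3 3 = 0 := by linarith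
  exact (mul_eq_zero.mp this).resolve_left hα.ne'

theorem stmt_16 (α : ℝ) (β : ℝ) (hα : 0 < α) (R : Matrix (Fin 4) (Fin 4) ℝ) :
    ((∃ (η : ℝ) (D : Matrix (Fin 4) (Fin 4) ℝ), IsDer α β D ∧
        R = η • (1 : Matrix (Fin 4) (Fin 4) ℝ) + D) ↔
      (R 3 0 = 0 ∧ R 3 1 = 0 ∧ R 3 2 = 0 ∧ R 2 2 = R 1 1 ∧ R 2 1 = -R 1 2 ∧ β * R 1 0 + R 2 0 = α * R 1 0 ∧ -R 1 0 + β * R 2 0 = α * R 2 0 ∧ α * R 0 1 = β * R 0 1 - R 0 2 ∧ α * R 0 2 = R 0 1 + β * R 0 2)) ∧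
    (∀ (η : ℝ) (D : Matrix (Fin 4) (Fin 4) ℝ), IsDer α β D →
      R = η • (1 : Matrix (Fin 4) (Fin 4) ℝ) + D → η = R 3 3) := by
  constructor
  · constructor
    · rintro ⟨η, D, hD, rfl⟩
      have hα' : α ≠ 0 := hα.ne'
      have h33 : D 3 3 = 0 := der_D33 α β hα D hD
      have a1 := congrFun (hD ![1,0,0,0] ![0,0,0,1]) 1
      have a2 := congrFun (hD ![1,0,0,0] ![0,0,0,1]) 2
      have a3 := congrFun (hD ![1,0,0,0] ![0,0,0,1]) 3
      have b0 := congrFun (hD ![0,1,0,0] ![0,0,0,1]) 0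
      have b1 := congrFun (hD ![0,1,0,0] ![0,0,0,1]) 1
      have b2 := congrFun (hD ![0,1,0,0] ![0,0,0,1]) 2
      have c0 := congrFun (hD ![0,0,1,0] ![0,0,0,1]) 0
      have d0 := congrFun (hD ![1,0,0,0] ![0,1,0,0]) 0
      have e0 := congrFun (hD ![1,0,0,0] ![0,0,1,0]) 0
      simp [br, Matrix.mulVec, dotProduct, Fin.sum_univ_four] at a1 a2 a3 b0 b1 b2 c0 d0 e0
      rw [h33] at b1 b2
      have h30 : D 3 0 = 0 := a3.resolve_right hα'
      have h31 : D 3 1 = 0 := d0.resolve_left hα'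
      have h32 : D 3 2 = 0 := e0.resolve_left hα'
      simp [Matrix.add_apply, Matrix.smul_apply, Matrix.one_apply, h30, h31, h32, h33]
      refine ⟨by linarith, by linarith, by linarith, by linarith, by linarith, by linarith⟩
    · rintro ⟨h1, h2, h3, h4, h5, h6, h7, h8, h9⟩
      have key : (1 + (α - β)^2) ≠ 0 := by positivity
      have h10 : R 1 0 = 0 := by
        have : R 1 0 * (1 + (α - β)^2) = 0 := by linear_combination (β - α) * h6 - h7
        exact (mul_eq_zero.mp this).resolve_right key
      have h20 : R 2 0 = 0 := by linear_combination h6 + (α - β) * h10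
      have h01 : R 0 1 = 0 := by
        have : R 0 1 * (1 + (α - β)^2) = 0 := by linear_combination (α - β) * h8 - h9
        exact (mul_eq_zero.mp this).resolve_right key
      have h02 : R 0 2 = 0 := by linear_combination h8 + (β - α) * h01
      refine ⟨R 3 3, !![R 0 0 - R 3 3, 0, 0, R 0 3;
          0, R 1 1 - R 3 3, R 1 2, R 1 3;
          0, -(R 1 2), R 1 1 - R 3 3, R 2 3; 0,0,0,0],
        der_explicit α β _ _ _ _ _ _, ?_⟩
      ext i j
      fin_cases i <;> fin_cases j <;>
        simp [Matrix.add_apply, Matrix.smul_apply, Matrix.one_apply, h1, h2, h3, h10, h20,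
          h01, h02, Matrix.vecHead, Matrix.vecTail] <;> linarith
  · rintro η D hD rfl
    have h33 : D 3 3 = 0 := der_D33 α β hα D hD
    simp [Matrix.add_apply, Matrix.smul_apply, Matrix.one_apply, h33]
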